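/- Let W be a separable complex Hilbert space with orthonormal basis (e_i)_{i≥1}, and let X be a nonempty set. For each i let k_i : X × X → ℂ be a positive definite kernel, and assume that for every x ∈ X there exists C > 0 such that |k_i(x,x)| ≤ C for all i. Then for every x, y ∈ X there is a unique bounded operator k(x,y) ∈ B(W) with k(x,y) e_i = k_i(x,y) e_i for all i, and the resulting map k : X × X → B(W) is a B(W)-valued positive definite kernel: k(x,y) = k(y,x)* for all x, y ∈ X, and for every n ∈ ℕ, c_1,…,c_n ∈ B(W), and x_1,…,x_n ∈ X, the operator Σ_{i,j=1}^n c_i* k(x_i,x_j) c_j is positive. -/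

import Mathlib

open scoped ComplexOrder

open scoped InnerProductSpace ENNReal

noncomputable section



noncomputable section

/-- Construction of a bounded diagonal operator from a bounded sequence of eigenvalues. -/
lemma exists_diagOp {W : Type*} [NormedAddCommGroup W] [InnerProductSpace ℂ W] [CompleteSpace W]
    (e : HilbertBasis ℕ ℂ W) (m : ℕ → ℂ) (M : ℝ) (hm : ∀ i, ‖m i‖ ≤ M) :
    ∃ T : W →L[ℂ] W, ∀ i, T (e i) = m i • e i := by
  have hM0 : 0 ≤ M := le_trans (norm_nonneg (m 0)) (hm 0)
  have htr : (0:ℝ) < (2 : ℝ≥0∞).toReal := by norm_num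
  have hmem : ∀ f : lp (fun _ : ℕ => ℂ) 2, Memℓp (fun i => m i * f i) 2 := by
    intro f
    apply memℓp_gen
    have hf : Summable fun i => ‖f i‖ ^ (2 : ℝ≥0∞).toReal := (lp.memℓp f).summable htr
    refine Summable.of_nonneg_of_le (fun i => ?_) (fun i => ?_) (hf.mul_left (M ^ (2 : ℝ≥0∞).toReal))
    · positivity
    · calc ‖m i * f i‖ ^ (2 : ℝ≥0∞).toReal = (‖m i‖ * ‖f i‖) ^ (2 : ℝ≥0∞).toReal := by
            rw [norm_mul]
        _ ≤ (M * ‖f i‖) ^ (2 : ℝ≥0∞).toReal := by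
            apply Real.rpow_le_rpow (by positivity)
              (mul_le_mul_of_nonneg_right (hm i) (norm_nonneg _)) htr.le
        _ = M ^ (2 : ℝ≥0∞).toReal * ‖f i‖ ^ (2 : ℝ≥0∞).toReal :=
            Real.mul_rpow hM0 (norm_nonneg _)
  set g : lp (fun _ : ℕ => ℂ) 2 → lp (fun _ : ℕ => ℂ) 2 :=
    fun f => ⟨fun i => m i * f i, hmem f⟩ with hg
  have hgnorm : ∀ f, ‖g f‖ ≤ M * ‖f‖ := by
    intro f
    have h1 : ‖g f‖ ^ (2 : ℝ≥0∞).toReal ≤ (M * ‖f‖) ^ (2 : ℝ≥0∞).toReal := by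
      rw [lp.norm_rpow_eq_tsum htr]
      calc ∑' i, ‖(g f : ∀ _ : ℕ, ℂ) i‖ ^ (2 : ℝ≥0∞).toReal
          ≤ ∑' i, M ^ (2 : ℝ≥0∞).toReal * ‖f i‖ ^ (2 : ℝ≥0∞).toReal := by
            apply Summable.tsum_le_tsum _ _ (((lp.memℓp f).summable htr).mul_left _)
            · intro i
              calc ‖(g f : ∀ _ : ℕ, ℂ) i‖ ^ (2 : ℝ≥0∞).toReal
                  = (‖m i‖ * ‖f i‖) ^ (2 : ℝ≥0∞).toReal := by
                    simp [hg, norm_mul]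
                _ ≤ (M * ‖f i‖) ^ (2 : ℝ≥0∞).toReal :=
                    Real.rpow_le_rpow (by positivity)
                      (mul_le_mul_of_nonneg_right (hm i) (norm_nonneg _)) htr.le
                _ = M ^ (2 : ℝ≥0∞).toReal * ‖f i‖ ^ (2 : ℝ≥0∞).toReal :=
                    Real.mul_rpow hM0 (norm_nonneg _)
            · exact memℓp_gen_iff htr |>.mp (lp.memℓp (g f))
        _ = M ^ (2 : ℝ≥0∞).toReal * ∑' i, ‖f i‖ ^ (2 : ℝ≥0∞).toReal := tsum_mul_left
        _ = M ^ (2 : ℝ≥0∞).toReal * ‖f‖ ^ (2 : ℝ≥0∞).toReal := by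
            rw [lp.norm_rpow_eq_tsum htr]
        _ = (M * ‖f‖) ^ (2 : ℝ≥0∞).toReal := (Real.mul_rpow hM0 (norm_nonneg _)).symm
    exact (Real.rpow_le_rpow_iff (norm_nonneg _) (by positivity) htr).mp h1
  -- the linear map
  set L : W →ₗ[ℂ] W :=
    { toFun := fun w => e.repr.symm (g (e.repr w))
      map_add' := by
        intro w w'
        show e.repr.symm (g (e.repr (w + w'))) =
          e.repr.symm (g (e.repr w)) + e.repr.symm (g (e.repr w'))
        rw [← LinearIsometryEquiv.map_add]
        refine congrArg _ (lp.ext (funext fun i => ?_))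
        simp [hg, map_add, mul_add, lp.coeFn_add, Pi.add_apply]
        rfl
      map_smul' := by
        intro c w
        show e.repr.symm (g (e.repr (c • w))) = c • e.repr.symm (g (e.repr w))
        rw [← LinearIsometryEquiv.map_smul]
        refine congrArg _ (lp.ext (funext fun i => ?_))
        simp only [hg, map_smul, lp.coeFn_smul, Pi.smul_apply, smul_eq_mul]
        ring } with hL
  have hLb : ∀ w, ‖L w‖ ≤ M * ‖w‖ := by
    intro w
    simp only [hL, LinearMap.coe_mk, AddHom.coe_mk]
    rw [LinearIsometryEquiv.norm_map]
    calc ‖g (e.repr w)‖ ≤ M * ‖e.repr w‖ := hgnorm _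
      _ = M * ‖w‖ := by rw [LinearIsometryEquiv.norm_map]
  refine ⟨L.mkContinuous M hLb, fun i => ?_⟩
  show e.repr.symm (g (e.repr (e i))) = m i • e i
  classical
  have h2 : g (e.repr (e i)) = m i • e.repr (e i) := by
    apply lp.ext
    funext j
    rw [e.repr_self]
    simp only [hg, lp.coeFn_smul, Pi.smul_apply]
    rcases eq_or_ne j i with rfl | hji
    · simp [lp.single_apply_self]
    · simp [lp.single_apply_ne _ _ _ hji, Pi.single_apply, hji]
  rw [h2, LinearIsometryEquiv.map_smul, LinearIsometryEquiv.symm_apply_apply]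

end


lemma kc_norm_bound {X : Type*} (kc : ℕ → X → X → ℂ)
    (h_herm : ∀ (i : ℕ) (x y : X), kc i x y = starRingEnd ℂ (kc i y x))
    (h_pd : ∀ (i : ℕ) (n : ℕ) (α : Fin n → ℂ) (x : Fin n → X),
      0 ≤ ∑ p, ∑ q, starRingEnd ℂ (α p) * α q * kc i (x p) (x q))
    (h_bdd : ∀ x : X, ∃ C : ℝ, 0 < C ∧ ∀ i : ℕ, ‖kc i x x‖ ≤ C)
    (x y : X) : ∃ M : ℝ, 0 ≤ M ∧ ∀ i, ‖kc i x y‖ ≤ M := by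
  obtain ⟨Cx, hCx, hCx'⟩ := h_bdd x
  obtain ⟨Cy, hCy, hCy'⟩ := h_bdd y
  refine ⟨Real.sqrt (Cx * Cy), Real.sqrt_nonneg _, fun i => ?_⟩
  -- diagonal values are nonnegative reals
  have hdiag : ∀ z : X, 0 ≤ kc i z z := by
    intro z
    have := h_pd i 1 (fun _ => 1) (fun _ => z)
    simpa using this
  have hAre : 0 ≤ (kc i x x).re ∧ (kc i x x).im = 0 := by
    have := Complex.le_def.mp (hdiag x); simpa using ⟨this.1, this.2.symm⟩
  have hBre : 0 ≤ (kc i y y).re ∧ (kc i y y).im = 0 := by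
    have := Complex.le_def.mp (hdiag y); simpa using ⟨this.1, this.2.symm⟩
  have hACx : (kc i x x).re ≤ Cx := by
    have : ‖kc i x x‖ = (kc i x x).re := by
      rw [Complex.norm_def, Complex.normSq_apply, hAre.2]
      simp [Real.sqrt_mul_self hAre.1]
    rw [← this]; exact hCx' i
  have hBCy : (kc i y y).re ≤ Cy := by
    have : ‖kc i y y‖ = (kc i y y).re := by
      rw [Complex.norm_def, Complex.normSq_apply, hBre.2]
      simp [Real.sqrt_mul_self hBre.1]
    rw [← this]; exact hCy' i
  set K := kc i x y with hK
  -- quadratic inequality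
  have hquad : ∀ t : ℝ, 0 ≤ (kc i x x).re * (t * t) +
      (2 * Complex.normSq K) * t + Complex.normSq K * (kc i y y).re := by
    intro t
    have h2 := h_pd i 2 ![(t : ℂ), starRingEnd ℂ K] ![x, y]
    simp only [Fin.sum_univ_two, Matrix.cons_val_zero, Matrix.cons_val_one,
      Matrix.head_cons] at h2
    rw [h_herm i y x] at h2
    have heq : starRingEnd ℂ ↑t * ↑t * kc i x x +
        starRingEnd ℂ ↑t * starRingEnd ℂ K * kc i x y +
        (starRingEnd ℂ (starRingEnd ℂ K) * ↑t * starRingEnd ℂ K +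
          starRingEnd ℂ (starRingEnd ℂ K) * starRingEnd ℂ K * kc i y y) =
        (((t * t) : ℝ) : ℂ) * kc i x x + ((2 * t * Complex.normSq K : ℝ) : ℂ) +
          ((Complex.normSq K : ℝ) : ℂ) * kc i y y := by
      push_cast
      rw [Complex.normSq_eq_conj_mul_self, Complex.conj_conj, Complex.conj_ofReal, ← hK]
      ring
    rw [heq] at h2
    have hc := (Complex.le_def.mp h2).1
    simp only [Complex.zero_re, Complex.add_re, Complex.mul_re, Complex.ofReal_re,
      Complex.ofReal_im, hAre.2, hBre.2, mul_zero, zero_mul, sub_zero] at hc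
    ring_nf at hc ⊢
    linarith
  have hdisc := discrim_le_zero hquad
  rw [discrim] at hdisc
  have hns : Complex.normSq K ≤ Cx * Cy := by
    rcases eq_or_lt_of_le (Complex.normSq_nonneg K) with h0 | h0
    · rw [← h0]; positivity
    · have h1 : Complex.normSq K ≤ (kc i x x).re * (kc i y y).re := by nlinarith
      calc Complex.normSq K ≤ (kc i x x).re * (kc i y y).re := h1
        _ ≤ Cx * Cy := by nlinarith
  calc ‖K‖ = Real.sqrt (Complex.normSq K) := by rw [Complex.norm_def]
    _ ≤ Real.sqrt (Cx * Cy) := Real.sqrt_le_sqrt hns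


/-- **Diagonal operator-valued positive definite kernels.** Let `W` be a separable complex
Hilbert space with Hilbert (orthonormal) basis `(e i)_{i : ℕ}`, and for each `i` let
`kc i : X × X → ℂ` be a positive definite kernel, uniformly bounded on the diagonal at each
point. Then for all `x y` there is a unique bounded operator `k x y` with
`k x y (e i) = kc i x y • e i` for all `i`, and any such family is a `B(W)`-valued positive
definite kernel: `k x y = (k y x)*` and all operators `∑ i j, (c i)* k (x i) (x j) (c j)`
are positive. -/
theorem diagonal_operator_valued_pdk
    {W : Type*} [NormedAddCommGroup W] [InnerProductSpace ℂ W] [CompleteSpace W]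
    (e : HilbertBasis ℕ ℂ W)
    {X : Type*} [Nonempty X] (kc : ℕ → X → X → ℂ)
    (h_herm : ∀ (i : ℕ) (x y : X), kc i x y = starRingEnd ℂ (kc i y x))
    (h_pd : ∀ (i : ℕ) (n : ℕ) (α : Fin n → ℂ) (x : Fin n → X),
      0 ≤ ∑ p, ∑ q, starRingEnd ℂ (α p) * α q * kc i (x p) (x q))
    (h_bdd : ∀ x : X, ∃ C : ℝ, 0 < C ∧ ∀ i : ℕ, ‖kc i x x‖ ≤ C) :
    (∀ x y : X, ∃! T : W →L[ℂ] W, ∀ i : ℕ, T (e i) = kc i x y • e i) ∧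
    (∀ k : X → X → (W →L[ℂ] W),
      (∀ (x y : X) (i : ℕ), k x y (e i) = kc i x y • e i) →
      (∀ x y : X, k x y = star (k y x)) ∧
      (∀ (n : ℕ) (c : Fin n → (W →L[ℂ] W)) (x : Fin n → X),
        (∑ p, ∑ q, star (c p) * k (x p) (x q) * c q).IsPositive)) := by
  -- two operators agreeing on the basis are equal
  have hext : ∀ (T T' : W →L[ℂ] W), (∀ i, T (e i) = T' (e i)) → T = T' := by
    intro T T' h
    refine ContinuousLinearMap.ext_on (s := Set.range e)
      (Submodule.dense_iff_topologicalClosure_eq_top.mpr e.dense_span) ?_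
    rintro _ ⟨i, rfl⟩
    exact h i
  have horth := orthonormal_iff_ite.mp e.orthonormal
  constructor
  · intro x y
    obtain ⟨M, hM0, hM⟩ := kc_norm_bound kc h_herm h_pd h_bdd x y
    obtain ⟨T, hT⟩ := exists_diagOp e (fun i => kc i x y) M hM
    exact ⟨T, hT, fun T' hT' => hext T' T fun i => by rw [hT i, hT' i]⟩
  · intro k hk
    have hherm : ∀ x y : X, k x y = star (k y x) := by
      intro x y
      apply hext
      intro i
      rw [hk x y i, ContinuousLinearMap.star_eq_adjoint]
      refine (e.repr.injective (lp.ext (funext fun j => ?_))).symm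
      rw [e.repr_apply_apply, e.repr_apply_apply, ContinuousLinearMap.adjoint_inner_right,
        hk y x j, inner_smul_left, inner_smul_right, horth j i]
      rcases eq_or_ne j i with rfl | hji
      · rw [if_pos rfl, mul_one, mul_one, ← h_herm]
      · rw [if_neg hji, mul_zero, mul_zero]
    refine ⟨hherm, ?_⟩
    have hink : ∀ (x y : X) (v : W) (i : ℕ),
        ⟪(k x y) v, e i⟫_ℂ = kc i y x * ⟪v, e i⟫_ℂ := by
      intro x y v i
      rw [← ContinuousLinearMap.adjoint_inner_right, ← ContinuousLinearMap.star_eq_adjoint,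
        ← hherm y x, hk y x i, inner_smul_right]
    intro n c x
    constructor
    · -- self-adjointness
      refine (?_ : IsSelfAdjoint _).isSymmetric
      show star _ = _
      rw [star_sum, Finset.sum_comm]
      refine Finset.sum_congr rfl fun p _ => ?_
      rw [star_sum]
      refine Finset.sum_congr rfl fun q _ => ?_
      simp only [star_mul, star_star]
      rw [← hherm (x q) (x p)]
      simp [mul_assoc]
    · intro w
      rw [ContinuousLinearMap.reApplyInnerSelf_apply]
      set F : Fin n → Fin n → ℕ → ℂ :=
        fun p q i => ⟪k (x p) (x q) ((c q) w), e i⟫_ℂ * ⟪e i, (c p) w⟫_ℂ with hF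
      have hFsum : ∀ p q, Summable (F p q) := fun p q => e.summable_inner_mul_inner _ _
      have hTw : ⟪(∑ p, ∑ q, star (c p) * k (x p) (x q) * c q) w, w⟫_ℂ
          = ∑' i, ∑ p, ∑ q, F p q i := by
        rw [Summable.tsum_finsetSum (fun p _ => summable_sum (fun q _ => hFsum p q))]
        rw [ContinuousLinearMap.sum_apply, sum_inner]
        refine Finset.sum_congr rfl fun p _ => ?_
        rw [Summable.tsum_finsetSum (fun q _ => hFsum p q)]
        rw [ContinuousLinearMap.sum_apply, sum_inner]
        refine Finset.sum_congr rfl fun q _ => ?_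
        rw [ContinuousLinearMap.mul_apply, ContinuousLinearMap.mul_apply,
          ContinuousLinearMap.star_eq_adjoint, ContinuousLinearMap.adjoint_inner_left,
          ← e.tsum_inner_mul_inner]
      have hSnn : ∀ i, 0 ≤ (∑ p, ∑ q, F p q i).re := by
        intro i
        have hpd := h_pd i n (fun p => ⟪e i, (c p) w⟫_ℂ) x
        have hre := (Complex.le_def.mp hpd).1
        rw [Complex.zero_re] at hre
        have hS : ∑ p, ∑ q, F p q i =
            ∑ p, ∑ q, starRingEnd ℂ ⟪e i, (c p) w⟫_ℂ * ⟪e i, (c q) w⟫_ℂ * kc i (x p) (x q) := by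
          rw [Finset.sum_comm]
          refine Finset.sum_congr rfl fun p _ => Finset.sum_congr rfl fun q _ => ?_
          rw [hF]
          simp only
          rw [hink, ← inner_conj_symm ((c p) w) (e i)]
          ring
        rw [hS]
        exact hre
      rw [hTw, RCLike.re_to_complex, Complex.re_tsum
        (summable_sum fun p _ => summable_sum fun q _ => hFsum p q)]
      exact tsum_nonneg fun i => hSnn i

end
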